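/- Let k ∈ {1,2} and let u, v, w be positive integers. Then, with φ, ε, Δ as above: tr(Δ²ᵏ σ₁⁻¹ σ₂ᵘ σ₁⁻¹ σ₂ᵛ σ₁⁻¹ σ₂ʷ) = (-1)ᵏ (1 + u + v + w + u(1+v) + v(1+w) + w(1+u) + (1+u)(1+v)(1+w)) and ε(Δ²ᵏ σ₁⁻¹ σ₂ᵘ σ₁⁻¹ σ₂ᵛ σ₁⁻¹ σ₂ʷ) = u + v + w - 3 + 6k. -/

import Mathlib

open Matrix

abbrev SL2Z := Matrix.SpecialLinearGroup (Fin 2) ℤ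

def braidRels : Set (FreeGroup Bool) :=
  {FreeGroup.of true * FreeGroup.of false * FreeGroup.of true *
    (FreeGroup.of false * FreeGroup.of true * FreeGroup.of false)⁻¹}

abbrev B3 := PresentedGroup braidRels

def σ₁ : B3 := PresentedGroup.of true
def σ₂ : B3 := PresentedGroup.of false
def Δ : B3 := σ₁ * σ₂ * σ₁

def S : SL2Z := ⟨!![1, 1; 0, 1], by norm_num [Matrix.det_fin_two_of]⟩
def T : SL2Z := ⟨!![1, 0; -1, 1], by norm_num [Matrix.det_fin_two_of]⟩

lemma STS_eq_TST : S * T * S = T * S * T := by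
  ext i j
  fin_cases i <;> fin_cases j <;>
    rfl

def φ : B3 →* SL2Z :=
  PresentedGroup.toGroup (f := fun b => if b then S else T) (by
    intro r hr
    simp only [braidRels, Set.mem_singleton_iff] at hr
    subst hr
    simp only [_root_.map_mul, _root_.map_inv, FreeGroup.lift_apply_of, if_true, if_false]
    rw [mul_inv_eq_one]
    exact STS_eq_TST)

def ε : B3 →* Multiplicative ℤ :=
  PresentedGroup.toGroup (f := fun _ => Multiplicative.ofAdd (1 : ℤ)) (by
    intro r hr
    simp only [braidRels, Set.mem_singleton_iff] at hr
    subst hr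
    simp only [_root_.map_mul, _root_.map_inv, FreeGroup.lift_apply_of]
    group)

def expSum (g : B3) : ℤ := Multiplicative.toAdd (ε g)

def trB (g : B3) : ℤ := Matrix.trace (φ g : Matrix (Fin 2) (Fin 2) ℤ)


lemma phi_s1 : φ σ₁ = S := by
  simp [φ, σ₁, PresentedGroup.toGroup.of]

lemma phi_s2 : φ σ₂ = T := by
  simp [φ, σ₂, PresentedGroup.toGroup.of]

lemma Tpow_coe (n : ℕ) : ((T ^ n : SL2Z) : Matrix (Fin 2) (Fin 2) ℤ) = !![1, 0; -(n:ℤ), 1] := by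
  induction n with
  | zero => simp [Matrix.one_fin_two]
  | succ m ih =>
    rw [pow_succ, Matrix.SpecialLinearGroup.coe_mul, ih]
    simp [T, Matrix.mul_fin_two]
    ring_nf

lemma Sinv_coe : ((S⁻¹ : SL2Z) : Matrix (Fin 2) (Fin 2) ℤ) = !![1, -1; 0, 1] := by
  have : S⁻¹ = ⟨!![1, -1; 0, 1], by norm_num [Matrix.det_fin_two_of]⟩ := by
    apply inv_eq_of_mul_eq_one_right
    ext i j; fin_cases i <;> fin_cases j <;> rfl
  rw [this]

lemma STS_coe : ((S * T * S : SL2Z) : Matrix (Fin 2) (Fin 2) ℤ) = !![0, 1; -1, 0] := by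
  simp only [Matrix.SpecialLinearGroup.coe_mul]
  simp [S, T, Matrix.mul_fin_two]

lemma Dpow_coe (m : ℕ) :
    (((S * T * S) ^ (2 * m) : SL2Z) : Matrix (Fin 2) (Fin 2) ℤ) = (-1 : ℤ) ^ m • 1 := by
  induction m with
  | zero => simp
  | succ j ih =>
    rw [Nat.mul_succ, pow_add, Matrix.SpecialLinearGroup.coe_mul, ih, pow_two,
      Matrix.SpecialLinearGroup.coe_mul, STS_coe]
    rw [pow_succ]
    ext i jj
    fin_cases i <;> fin_cases jj <;>
      simp [Matrix.mul_apply, Fin.sum_univ_succ, Matrix.one_fin_two]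

lemma eps_s1 : ε σ₁ = Multiplicative.ofAdd (1 : ℤ) := by
  simp [ε, σ₁, PresentedGroup.toGroup.of]

lemma eps_s2 : ε σ₂ = Multiplicative.ofAdd (1 : ℤ) := by
  simp [ε, σ₂, PresentedGroup.toGroup.of]

/-- Trace and exponent sum of Δ²ᵏ σ₁⁻¹ σ₂ᵘ σ₁⁻¹ σ₂ᵛ σ₁⁻¹ σ₂ʷ for k ∈ {1,2} and
positive u, v, w. -/
theorem stmt16 (k u v w : ℕ) (hk : k = 1 ∨ k = 2)
    (hu : 0 < u) (hv : 0 < v) (hw : 0 < w) :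
    trB (Δ ^ (2 * k) * σ₁⁻¹ * σ₂ ^ u * σ₁⁻¹ * σ₂ ^ v * σ₁⁻¹ * σ₂ ^ w) =
      (-1) ^ k * (1 + (u : ℤ) + v + w + u * (1 + v) + v * (1 + w) + w * (1 + u) +
        (1 + u) * (1 + v) * (1 + w)) ∧
    expSum (Δ ^ (2 * k) * σ₁⁻¹ * σ₂ ^ u * σ₁⁻¹ * σ₂ ^ v * σ₁⁻¹ * σ₂ ^ w) =
      (u : ℤ) + v + w - 3 + 6 * k := by
  constructor
  · have hmat : ((φ (Δ ^ (2 * k) * σ₁⁻¹ * σ₂ ^ u * σ₁⁻¹ * σ₂ ^ v * σ₁⁻¹ * σ₂ ^ w) : SL2Z) :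
        Matrix (Fin 2) (Fin 2) ℤ) =
        ((-1 : ℤ) ^ k • 1) * !![1, -1; 0, 1] * !![1, 0; -(u:ℤ), 1] * !![1, -1; 0, 1] *
          !![1, 0; -(v:ℤ), 1] * !![1, -1; 0, 1] * !![1, 0; -(w:ℤ), 1] := by
      simp only [Δ, _root_.map_mul, _root_.map_pow, _root_.map_inv, phi_s1, phi_s2,
        Matrix.SpecialLinearGroup.coe_mul]
      rw [Dpow_coe, Tpow_coe, Tpow_coe, Tpow_coe, Sinv_coe]
    unfold trB
    rw [hmat]
    rw [Matrix.smul_mul, Matrix.smul_mul, Matrix.smul_mul, Matrix.smul_mul,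
      Matrix.smul_mul, Matrix.smul_mul, Matrix.one_mul, Matrix.trace_smul]
    simp only [Matrix.mul_fin_two, Matrix.trace_fin_two_of, smul_eq_mul]
    ring
  · simp only [expSum, Δ, _root_.map_mul, _root_.map_pow, _root_.map_inv, eps_s1, eps_s2]
    simp only [← ofAdd_add, ← ofAdd_nsmul, toAdd_mul, toAdd_inv, toAdd_pow, toAdd_ofAdd]
    push_cast
    ring
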